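/- Let p be a prime, s ≥ 1 with s < p, M an integer, and a_0, ..., a_{s-1} integers with gcd(a_0,...,a_{s-1},p) = 1. For N with 1 ≤ N < p^2, the exponential sum S = Σ_{u=M+1}^{M+N} e_p(Σ_{j=0}^{s-1} a_j·q_p(u+j)) satisfies |S| ≤ C·s·p·log p for an absolute constant C, where e_p(z) = exp(2πiz/p). -/

import Mathlib

/-- The Fermat quotient `q_p(u)`: the unique integer in `[0, p-1]` congruent to
`(u^(p-1) - 1)/p` modulo `p` when `gcd(u,p) = 1`, and `0` on multiples of `p`. -/
def fermatQuotient (p : ℕ) (u : ℤ) : ℤ :=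
  if (p : ℤ) ∣ u then 0 else ((u ^ (p - 1) - 1) / (p : ℤ)) % (p : ℤ)


lemma binom_mod (v t : ℤ) (n : ℕ) :
    (v + t) ^ n ≡ v ^ n + n * v ^ (n - 1) * t [ZMOD t ^ 2] := by
  induction n with
  | zero => simp
  | succ n ih =>
    have hv : (n : ℤ) * v ^ (n - 1) * v = n * v ^ n := by
      cases n with
      | zero => simp
      | succ m => simp [pow_succ]; ring
    have h2 : (v + t) ^ (n + 1) ≡ (v ^ n + n * v ^ (n - 1) * t) * (v + t) [ZMOD t ^ 2] := by
      rw [pow_succ (v + t)]; exact ih.mul_right _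
    refine h2.trans ?_
    have key : (v ^ n + (n : ℤ) * v ^ (n - 1) * t) * (v + t) =
        v ^ (n + 1) + ((n : ℤ) + 1) * v ^ n * t + ((n : ℤ) * v ^ (n - 1)) * t ^ 2 := by
      linear_combination t * hv
    rw [key]
    push_cast
    have : (t : ℤ) ^ 2 ∣ ((n : ℤ) * v ^ (n - 1)) * t ^ 2 := ⟨(n : ℤ) * v ^ (n - 1), by ring⟩
    calc v ^ (n + 1) + ((n : ℤ) + 1) * v ^ n * t + ((n : ℤ) * v ^ (n - 1)) * t ^ 2
        ≡ v ^ (n + 1) + ((n : ℤ) + 1) * v ^ n * t + 0 [ZMOD t ^ 2] :=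
          Int.ModEq.add_left _ ((Int.modEq_zero_iff_dvd).mpr this)
      _ = v ^ (n + 1) + ((n : ℤ) + 1) * v ^ n * t := by ring

lemma fq_shift (p : ℕ) (hp : p.Prime) (v k : ℤ) :
    fermatQuotient p (v + k * p) ≡
      fermatQuotient p v - k * (((v : ZMod p)⁻¹).val : ℤ) [ZMOD (p : ℤ)] := by
  haveI : Fact p.Prime := ⟨hp⟩
  have hp0 : (p : ℤ) ≠ 0 := by exact_mod_cast hp.ne_zero
  by_cases hv : (p : ℤ) ∣ v
  · have hv2 : (p : ℤ) ∣ v + k * p := dvd_add hv ⟨k, by ring⟩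
    have hz : ((v : ZMod p)) = 0 := by rwa [ZMod.intCast_zmod_eq_zero_iff_dvd]
    simp [fermatQuotient, hv, hv2, hz]
  · have hz : ((v : ZMod p)) ≠ 0 := by rwa [Ne, ZMod.intCast_zmod_eq_zero_iff_dvd]
    have hv2 : ¬ (p : ℤ) ∣ v + k * p := by
      intro h
      exact hv (by simpa using h.sub (⟨k, by ring⟩ : (p : ℤ) ∣ k * p))
    set c : ℤ := (((v : ZMod p)⁻¹).val : ℤ) with hc
    have hcc : ((c : ZMod p)) = (v : ZMod p)⁻¹ := by
      rw [hc]; push_cast; rw [ZMod.natCast_val, ZMod.cast_id]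
    set A : ℤ := v ^ (p - 1) with hA
    set B : ℤ := (v + k * p) ^ (p - 1) with hB
    have hAone : ((A : ZMod p)) = 1 := by
      rw [hA]; push_cast; exact ZMod.pow_card_sub_one_eq_one hz
    have hA1 : (p : ℤ) ∣ A - 1 := by
      rw [← ZMod.intCast_zmod_eq_zero_iff_dvd]; push_cast; simp [hAone]
    obtain ⟨x, hx⟩ := hA1
    set c0 : ℤ := ((p - 1 : ℕ) : ℤ) * v ^ (p - 2) * k with hc0
    have hBA : B ≡ A + c0 * p [ZMOD (p : ℤ) ^ 2] := by
      have h1 := binom_mod v (k * (p : ℤ)) (p - 1)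
      have h2 : ((p : ℤ) ^ 2) ∣ (k * (p : ℤ)) ^ 2 := ⟨k ^ 2, by ring⟩
      have h3 : B ≡ A + ((p - 1 : ℕ) : ℤ) * v ^ (p - 1 - 1) * (k * p) [ZMOD (p : ℤ) ^ 2] :=
        Int.ModEq.of_dvd h2 h1
      have he : p - 1 - 1 = p - 2 := by omega
      rw [he] at h3
      have he2 : A + ((p - 1 : ℕ) : ℤ) * v ^ (p - 2) * (k * p) = A + c0 * p := by
        rw [hc0]; ring
      rwa [he2] at h3
    obtain ⟨m, hm⟩ : ((p : ℤ) ^ 2) ∣ (A + c0 * p) - B := Int.ModEq.dvd hBA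
    have hBval : B - 1 = (p : ℤ) * (x + c0 - p * m) := by
      have hB' : B = A + c0 * p - p ^ 2 * m := by linarith [hm]
      rw [hB']; linear_combination hx
    have hAq : fermatQuotient p v = x % (p : ℤ) := by
      rw [fermatQuotient, if_neg hv, ← hA, hx, Int.mul_ediv_cancel_left _ hp0]
    have hBq : fermatQuotient p (v + k * p) = (x + c0 - p * m) % (p : ℤ) := by
      rw [fermatQuotient, if_neg hv2, ← hB, hBval, Int.mul_ediv_cancel_left _ hp0]
    rw [hAq, hBq]
    have key : c0 ≡ -(k * c) [ZMOD (p : ℤ)] := by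
      have : ((c0 : ℤ) : ZMod p) = ((-(k * c) : ℤ) : ZMod p) := by
        push_cast [hc0]
        have hps : ((p - 1 : ℕ) : ZMod p) = -1 := by
          have h1 : (1 : ℕ) ≤ p := hp.one_lt.le
          push_cast [Nat.cast_sub h1]
          simp [ZMod.natCast_self]
        have hpow : ((v : ZMod p)) ^ (p - 2) = ((v : ZMod p))⁻¹ := by
          have h2l : 2 ≤ p := hp.two_le
          have h2 : p - 2 + 1 = p - 1 := by omega
          have hone : ((v : ZMod p)) ^ (p - 2) * ((v : ZMod p)) = 1 := by
            rw [← pow_succ, h2]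
            exact ZMod.pow_card_sub_one_eq_one hz
          calc ((v : ZMod p)) ^ (p - 2)
              = (((v : ZMod p)) ^ (p - 2) * ((v : ZMod p))) * ((v : ZMod p))⁻¹ := by
                rw [mul_assoc, mul_inv_cancel₀ hz, mul_one]
            _ = ((v : ZMod p))⁻¹ := by rw [hone, one_mul]
        rw [hps, hpow, hcc]; ring
      exact (ZMod.intCast_eq_intCast_iff _ _ _).mp this
    have step1 : (x + c0 - p * m) % (p : ℤ) ≡ x + c0 [ZMOD (p : ℤ)] := by
      have h0 : x + c0 - (p : ℤ) * m ≡ x + c0 [ZMOD (p : ℤ)] := by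
        simpa using (Int.ModEq.refl (x + c0)).sub
          (Int.modEq_zero_iff_dvd.mpr ⟨m, rfl⟩ : (p : ℤ) * m ≡ 0 [ZMOD (p : ℤ)])
      exact (Int.emod_emod_of_dvd _ dvd_rfl).trans h0
    have step2 : x % (p : ℤ) - k * c ≡ x + c0 [ZMOD (p : ℤ)] := by
      have h0 : x % (p : ℤ) ≡ x [ZMOD (p : ℤ)] := Int.emod_emod_of_dvd _ dvd_rfl
      calc x % (p : ℤ) - k * c ≡ x - k * c [ZMOD (p : ℤ)] := h0.sub_right _
        _ ≡ x + c0 [ZMOD (p : ℤ)] := by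
            have := key.symm.add_left x
            simpa [sub_eq_add_neg] using this
    exact step1.trans step2.symm


noncomputable def psiC (p : ℕ) (z : ℤ) : ℂ :=
  Complex.exp (((2 * Real.pi * z / p : ℝ) : ℂ) * Complex.I)

lemma psiC_norm (p : ℕ) (z : ℤ) : ‖psiC p z‖ = 1 :=
  Complex.norm_exp_ofReal_mul_I _

lemma psiC_add (p : ℕ) (a b : ℤ) : psiC p (a + b) = psiC p a * psiC p b := by
  rw [psiC, psiC, psiC, ← Complex.exp_add]
  congr 1
  push_cast
  ring

lemma psiC_zero (p : ℕ) : psiC p 0 = 1 := by simp [psiC]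

lemma psiC_mul_p (p : ℕ) (hp : 0 < p) (m : ℤ) : psiC p (m * p) = 1 := by
  have hp0 : (p : ℝ) ≠ 0 := by positivity
  have : (((2 * Real.pi * (m * p : ℤ) / p : ℝ)) : ℂ) * Complex.I = (m : ℤ) * (2 * Real.pi * Complex.I) := by
    have hpc : (p : ℂ) ≠ 0 := by exact_mod_cast hp0
    push_cast
    field_simp
  rw [psiC, this, Complex.exp_int_mul_two_pi_mul_I]

lemma psiC_congr (p : ℕ) (hp : 0 < p) {a b : ℤ} (h : a ≡ b [ZMOD (p : ℤ)]) :
    psiC p a = psiC p b := by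
  obtain ⟨t, ht⟩ := h.symm.dvd
  have : a = b + t * p := by linarith
  rw [this, psiC_add, psiC_mul_p p hp, mul_one]

lemma psiC_nat_mul (p : ℕ) (k : ℕ) (z : ℤ) : psiC p ((k : ℤ) * z) = (psiC p z) ^ k := by
  rw [psiC, psiC, ← Complex.exp_nat_mul]
  congr 1
  push_cast
  ring

lemma norm_exp_sub_one_ge (θ : ℝ) (hθ : |θ| ≤ Real.pi) :
    2 * |θ| / Real.pi ≤ ‖Complex.exp ((θ : ℂ) * Complex.I) - 1‖ := by
  have hpi := Real.pi_pos
  have h1 : Complex.exp ((θ : ℂ) * Complex.I) - 1 =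
      ((Real.cos θ - 1 : ℝ) : ℂ) + ((Real.sin θ : ℝ) : ℂ) * Complex.I := by
    rw [Complex.exp_mul_I, ← Complex.ofReal_cos, ← Complex.ofReal_sin]
    push_cast
    ring
  rw [h1, Complex.norm_def, Complex.normSq_add_mul_I]
  have h2 : (Real.cos θ - 1) ^ 2 + (Real.sin θ) ^ 2 = 2 - 2 * Real.cos θ := by
    nlinarith [Real.sin_sq_add_cos_sq θ]
  rw [h2]
  have h3 : Real.cos θ ≤ 1 - 2 / Real.pi ^ 2 * θ ^ 2 := Real.cos_le_one_sub_mul_cos_sq hθ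
  have hpi2 : (0:ℝ) < Real.pi ^ 2 := by positivity
  have hkey : 2 / Real.pi ^ 2 * θ ^ 2 * Real.pi ^ 2 = 2 * θ ^ 2 := by field_simp
  have h3' : 2 * θ ^ 2 ≤ (1 - Real.cos θ) * Real.pi ^ 2 := by
    nlinarith [mul_le_mul_of_nonneg_right h3 hpi2.le]
  have h4 : (2 * |θ| / Real.pi) ^ 2 ≤ 2 - 2 * Real.cos θ := by
    rw [div_pow, mul_pow, sq_abs, div_le_iff₀ hpi2]
    nlinarith
  calc 2 * |θ| / Real.pi = Real.sqrt ((2 * |θ| / Real.pi) ^ 2) := by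
        rw [Real.sqrt_sq (by positivity)]
    _ ≤ Real.sqrt (2 - 2 * Real.cos θ) := Real.sqrt_le_sqrt h4

noncomputable def Fbound (p : ℕ) (t : ZMod p) : ℝ :=
  if t = 0 then (p : ℝ) else (p : ℝ) / (2 * (min t.val (p - t.val) : ℕ))

lemma geom_bound (p : ℕ) (hp : 0 < p) (K t : ℕ) (ht0 : 0 < t) (htp : t < p) :
    ‖∑ k ∈ Finset.range K, (psiC p (t : ℤ)) ^ k‖ ≤
      (p : ℝ) / (2 * (min t (p - t) : ℕ)) := by
  have hpR : (0 : ℝ) < p := by exact_mod_cast hp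
  set δ : ℕ := min t (p - t) with hδ
  have hδ1 : 1 ≤ δ := by omega
  have hδR : (0 : ℝ) < δ := by exact_mod_cast hδ1
  set z : ℂ := psiC p (t : ℤ) with hzdef
  have hpi := Real.pi_pos
  -- lower bound on ‖z - 1‖
  have hlb : 4 * (δ : ℝ) / p ≤ ‖z - 1‖ := by
    by_cases hcase : 2 * t ≤ p
    · have hθ : z = Complex.exp (((2 * Real.pi * t / p : ℝ) : ℂ) * Complex.I) := by
        rw [hzdef, psiC]; norm_num
      have habs : |(2 * Real.pi * t / p : ℝ)| = 2 * Real.pi * t / p := by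
        rw [abs_of_nonneg]; positivity
      have h1 : |(2 * Real.pi * t / p : ℝ)| ≤ Real.pi := by
        rw [habs, div_le_iff₀ hpR]
        have : (2 * t : ℝ) ≤ p := by exact_mod_cast hcase
        nlinarith
      have h2 := norm_exp_sub_one_ge _ h1
      rw [← hθ] at h2
      refine le_trans ?_ h2
      rw [habs]
      have hδt : (δ : ℝ) ≤ t := by exact_mod_cast (min_le_left _ _)
      rw [div_le_div_iff₀ (by positivity) hpi]
      have hmul : 2 * Real.pi * (t:ℝ) / p * p = 2 * Real.pi * t := by field_simp
      nlinarith [hmul]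
    · push_neg at hcase
      have hθ : z = Complex.exp (((2 * Real.pi * ((t : ℝ) - p) / p : ℝ) : ℂ) * Complex.I) := by
        have hpc : (p : ℂ) ≠ 0 := by exact_mod_cast hpR.ne'
        rw [hzdef, psiC]
        have : (((2 * Real.pi * ((t : ℝ) - p) / p : ℝ)) : ℂ) * Complex.I =
            ((2 * Real.pi * ((t : ℤ) : ℝ) / p : ℝ) : ℂ) * Complex.I + (-1 : ℤ) * (2 * Real.pi * Complex.I) := by
          push_cast
          field_simp
          ring
        rw [this, Complex.exp_add, Complex.exp_int_mul_two_pi_mul_I, mul_one]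
      have habs : |(2 * Real.pi * ((t : ℝ) - p) / p : ℝ)| = 2 * Real.pi * ((p : ℝ) - t) / p := by
        rw [abs_of_nonpos]
        · field_simp; ring
        · have : (t : ℝ) ≤ p := by exact_mod_cast htp.le
          apply div_nonpos_of_nonpos_of_nonneg _ hpR.le
          nlinarith
      have h1 : |(2 * Real.pi * ((t : ℝ) - p) / p : ℝ)| ≤ Real.pi := by
        rw [habs, div_le_iff₀ hpR]
        have : (p : ℝ) < 2 * t := by exact_mod_cast hcase
        nlinarith
      have h2 := norm_exp_sub_one_ge _ h1
      rw [← hθ] at h2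
      refine le_trans ?_ h2
      rw [habs]
      have hδt : (δ : ℝ) ≤ (p : ℝ) - t := by
        have h3 : δ ≤ p - t := min_le_right _ _
        have h4 : (δ : ℝ) ≤ ((p - t : ℕ) : ℝ) := by exact_mod_cast h3
        rwa [Nat.cast_sub htp.le] at h4
      rw [div_le_div_iff₀ (by positivity) hpi]
      have hmul : 2 * Real.pi * ((p:ℝ) - t) / p * p = 2 * Real.pi * ((p:ℝ) - t) := by field_simp
      nlinarith [hmul]
  have hz1 : z ≠ 1 := by
    intro h
    rw [h, sub_self, norm_zero] at hlb
    have : (0:ℝ) < 4 * (δ : ℝ) / p := by positivity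
    linarith
  rw [geom_sum_eq hz1, norm_div]
  have hnum : ‖z ^ K - 1‖ ≤ 2 := by
    calc ‖z ^ K - 1‖ ≤ ‖z ^ K‖ + ‖(1:ℂ)‖ := norm_sub_le _ _
      _ = 2 := by rw [norm_pow, hzdef, psiC_norm]; norm_num
  have hden : (0:ℝ) < ‖z - 1‖ := lt_of_lt_of_le (by positivity) hlb
  calc ‖z ^ K - 1‖ / ‖z - 1‖ ≤ 2 / (4 * (δ : ℝ) / p) := by
        apply div_le_div₀ (by norm_num) hnum (by positivity) hlb
    _ = (p : ℝ) / (2 * δ) := by field_simp; ring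
  
lemma inner_bound (p K : ℕ) (hp : 0 < p) (hK : K ≤ p) (r : ℤ) :
    ‖∑ k ∈ Finset.range K, (psiC p r) ^ k‖ ≤ Fbound p ((r : ZMod p)) := by
  haveI : NeZero p := ⟨hp.ne'⟩
  by_cases h0 : ((r : ZMod p)) = 0
  · have hcong : r ≡ 0 [ZMOD (p : ℤ)] :=
      Int.modEq_zero_iff_dvd.mpr ((ZMod.intCast_zmod_eq_zero_iff_dvd _ _).mp h0)
    have h1 : psiC p r = 1 := by rw [psiC_congr p hp hcong, psiC_zero]
    rw [h1]
    simp only [one_pow, Finset.sum_const, Finset.card_range, nsmul_eq_mul, mul_one]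
    rw [Fbound, if_pos h0]
    simp only [Complex.norm_natCast]
    exact_mod_cast hK
  · set t : ZMod p := (r : ZMod p) with ht
    have htv0 : 0 < t.val := by
      rcases Nat.eq_zero_or_pos t.val with h | h
      · exact absurd ((ZMod.val_eq_zero t).mp h) h0
      · exact h
    have htvp : t.val < p := ZMod.val_lt t
    have hcong : r ≡ (t.val : ℤ) [ZMOD (p : ℤ)] := by
      rw [← ZMod.intCast_eq_intCast_iff]
      push_cast
      rw [ZMod.natCast_val, ZMod.cast_id]
    rw [psiC_congr p hp hcong, Fbound, if_neg h0]
    exact geom_bound p hp K t.val htv0 htvp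


open Polynomial

lemma fiber_bound (p s : ℕ) [Fact p.Prime] (hs : s < p) (a : ℕ → ℤ)
    (hj : ∃ j < s, ¬ (p : ℤ) ∣ a j) (t : ZMod p) :
    (Finset.univ.filter (fun x : ZMod p =>
      (∑ j ∈ Finset.range s, (a j : ZMod p) * (x + (j : ZMod p))⁻¹) = t)).card ≤ 2 * s := by
  have hp : p.Prime := Fact.out
  obtain ⟨j₀, hj₀s, hj₀⟩ := hj
  have ha₀ : ((a j₀ : ZMod p)) ≠ 0 := by
    rwa [Ne, ZMod.intCast_zmod_eq_zero_iff_dvd]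
  set R : ZMod p → ZMod p :=
    fun x => ∑ j ∈ Finset.range s, (a j : ZMod p) * (x + (j : ZMod p))⁻¹ with hR
  set Poles : Finset (ZMod p) := (Finset.range s).image (fun j : ℕ => -(j : ZMod p)) with hPoles
  set Q : Polynomial (ZMod p) :=
    (∑ j ∈ Finset.range s, C ((a j : ZMod p)) *
        ∏ i ∈ Finset.range s \ {j}, (X + C ((i : ZMod p)))) -
      C t * ∏ j ∈ Finset.range s, (X + C ((j : ZMod p))) with hQ
  have natcast_inj : ∀ i ∈ Finset.range s, ∀ j ∈ Finset.range s,
      ((i : ZMod p)) = (j : ZMod p) → i = j := by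
    intro i hi j hjj h
    rw [ZMod.natCast_eq_natCast_iff] at h
    have hi' := Finset.mem_range.mp hi
    have hj' := Finset.mem_range.mp hjj
    have := (Nat.ModEq.eq_of_lt_of_lt h (by omega) (by omega))
    exact this
  -- Q is nonzero
  have hQne : Q ≠ 0 := by
    intro h0
    have heval : Q.eval (-(j₀ : ZMod p)) = 0 := by rw [h0, eval_zero]
    rw [hQ] at heval
    simp only [eval_sub, eval_mul, eval_C, eval_finset_sum, eval_prod, eval_add, eval_X] at heval
    have hprod0 : (∏ j ∈ Finset.range s, (-(j₀ : ZMod p) + (j : ZMod p))) = 0 :=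
      Finset.prod_eq_zero (Finset.mem_range.mpr hj₀s) (by ring)
    rw [hprod0, mul_zero, sub_zero] at heval
    rw [Finset.sum_eq_single j₀] at heval
    · have : (∏ i ∈ Finset.range s \ {j₀}, (-(j₀ : ZMod p) + (i : ZMod p))) ≠ 0 := by
        rw [Finset.prod_ne_zero_iff]
        intro i hi
        have hi1 := Finset.mem_sdiff.mp hi
        intro hz
        have : ((i : ZMod p)) = (j₀ : ZMod p) := by linear_combination hz
        have := natcast_inj i hi1.1 j₀ (Finset.mem_range.mpr hj₀s) this
        exact (Finset.notMem_singleton.mp hi1.2) this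
      exact this (by
        rcases mul_eq_zero.mp heval with h | h
        · exact absurd h ha₀
        · exact h)
    · intro j hjmem hjne
      have : (∏ i ∈ Finset.range s \ {j}, (-(j₀ : ZMod p) + (i : ZMod p))) = 0 := by
        apply Finset.prod_eq_zero (i := j₀)
        · exact Finset.mem_sdiff.mpr ⟨Finset.mem_range.mpr hj₀s, Finset.notMem_singleton.mpr (Ne.symm hjne)⟩
        · ring
      rw [this, mul_zero]
    · intro h; exact absurd (Finset.mem_range.mpr hj₀s) h
  -- degree bound
  have hQdeg : Q.natDegree ≤ s := by
    rw [hQ]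
    refine le_trans (natDegree_sub_le _ _) (max_le ?_ ?_)
    · refine Polynomial.natDegree_sum_le_of_forall_le _ _ ?_
      intro j hjm
      refine le_trans (natDegree_C_mul_le _ _) ?_
      refine le_trans (natDegree_prod_le _ _) ?_
      refine le_trans (Finset.sum_le_card_nsmul _ _ 1 ?_) ?_
      · intro i hi; exact (natDegree_X_add_C _).le
      · simp only [smul_eq_mul, mul_one]
        calc (Finset.range s \ {j}).card ≤ (Finset.range s).card := Finset.card_le_card (Finset.sdiff_subset)
          _ = s := Finset.card_range s
    · refine le_trans (natDegree_C_mul_le _ _) ?_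
      refine le_trans (natDegree_prod_le _ _) ?_
      refine le_trans (Finset.sum_le_card_nsmul _ _ 1 ?_) ?_
      · intro i hi; exact (natDegree_X_add_C _).le
      · simp [Finset.card_range]
  -- fiber is contained in poles plus roots
  have hsub : (Finset.univ.filter (fun x : ZMod p => R x = t)) ⊆ Poles ∪ Q.roots.toFinset := by
    intro x hx
    rw [Finset.mem_filter] at hx
    by_cases hpole : x ∈ Poles
    · exact Finset.mem_union_left _ hpole
    · refine Finset.mem_union_right _ ?_
      rw [Multiset.mem_toFinset, mem_roots hQne]
      have hnz : ∀ j ∈ Finset.range s, x + (j : ZMod p) ≠ 0 := by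
        intro j hjm hz
        apply hpole
        rw [hPoles, Finset.mem_image]
        exact ⟨j, hjm, by linear_combination -hz⟩
      rw [IsRoot, hQ]
      simp only [eval_sub, eval_mul, eval_C, eval_finset_sum, eval_prod, eval_add, eval_X]
      have hprod : ∀ j ∈ Finset.range s,
          (∏ i ∈ Finset.range s \ {j}, (x + (i : ZMod p))) =
            (x + (j : ZMod p))⁻¹ * ∏ i ∈ Finset.range s, (x + (i : ZMod p)) := by
        intro j hjm
        have h1 : (∏ i ∈ Finset.range s, (x + (i : ZMod p))) =
            (∏ i ∈ Finset.range s \ {j}, (x + (i : ZMod p))) * (x + (j : ZMod p)) :=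
          Finset.prod_eq_prod_diff_singleton_mul hjm _
        rw [h1, mul_comm ((∏ i ∈ Finset.range s \ {j}, (x + (i : ZMod p)))) (x + (j : ZMod p)),
          ← mul_assoc, inv_mul_cancel₀ (hnz j hjm), one_mul]
      rw [Finset.sum_congr rfl (fun j hjm => by rw [hprod j hjm, ← mul_assoc])]
      rw [← Finset.sum_mul]
      have : (∑ j ∈ Finset.range s, (a j : ZMod p) * (x + (j : ZMod p))⁻¹) = t := hx.2
      rw [this]
      ring
  calc (Finset.univ.filter (fun x : ZMod p => R x = t)).card
      ≤ (Poles ∪ Q.roots.toFinset).card := Finset.card_le_card hsub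
    _ ≤ Poles.card + Q.roots.toFinset.card := Finset.card_union_le _ _
    _ ≤ s + s := by
        gcongr
        · calc Poles.card ≤ (Finset.range s).card := Finset.card_image_le
            _ = s := Finset.card_range s
        · calc Q.roots.toFinset.card ≤ Multiset.card Q.roots := Q.roots.toFinset_card_le
            _ ≤ Q.natDegree := Q.card_roots' 
            _ ≤ s := hQdeg
    _ = 2 * s := by ring

lemma sum_inv_Ico (p : ℕ) (hp : 2 ≤ p) :
    ∑ T ∈ Finset.Ico 1 p, (1 : ℝ) / ((p - T : ℕ)) = ∑ T ∈ Finset.Ico 1 p, (1 : ℝ) / T := by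
  refine Finset.sum_nbij' (fun T => p - T) (fun T => p - T) ?_ ?_ ?_ ?_ ?_
  · intro a ha; simp only [Finset.mem_Ico] at ha ⊢; omega
  · intro a ha; simp only [Finset.mem_Ico] at ha ⊢; omega
  · intro a ha; simp only [Finset.mem_Ico] at ha; show p - (p - a) = a; omega
  · intro a ha; simp only [Finset.mem_Ico] at ha; show p - (p - a) = a; omega
  · intro a ha; rfl

lemma harmonic_Ico (p : ℕ) (hp : 2 ≤ p) :
    ∑ T ∈ Finset.Ico 1 p, (1 : ℝ) / T = ((harmonic (p - 1) : ℚ) : ℝ) := by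
  rw [Finset.sum_Ico_eq_sum_range, harmonic]
  push_cast
  refine Finset.sum_congr (by congr 1) ?_
  intro i _
  ring

lemma sum_Fbound_le (p : ℕ) [NeZero p] (hp : 2 ≤ p) :
    ∑ t : ZMod p, Fbound p t ≤ (p : ℝ) * (2 + Real.log p) := by
  have hpR : (0 : ℝ) < p := by positivity
  have h0 : ∑ t : ZMod p, Fbound p t =
      Fbound p 0 + ∑ t ∈ Finset.univ.erase (0 : ZMod p), Fbound p t :=
    (Finset.add_sum_erase _ _ (Finset.mem_univ 0)).symm
  rw [h0, Fbound, if_pos rfl]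
  have hbij : ∑ t ∈ Finset.univ.erase (0 : ZMod p), Fbound p t =
      ∑ T ∈ Finset.Ico 1 p, (p : ℝ) / (2 * (min T (p - T) : ℕ)) := by
    refine Finset.sum_nbij' (fun t => (ZMod.val t)) (fun T => (T : ZMod p)) ?_ ?_ ?_ ?_ ?_
    · intro t ht
      simp only [Finset.mem_Ico]
      have h1 : t ≠ 0 := (Finset.mem_erase.mp ht).1
      constructor
      · rcases Nat.eq_zero_or_pos t.val with h | h
        · exact absurd ((ZMod.val_eq_zero t).mp h) h1
        · omega
      · exact ZMod.val_lt t
    · intro T hT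
      simp only [Finset.mem_Ico] at hT
      refine Finset.mem_erase.mpr ⟨?_, Finset.mem_univ _⟩
      intro h
      change ((T : ℕ) : ZMod p) = 0 at h
      have h2 := ZMod.val_natCast_of_lt hT.2
      rw [h, ZMod.val_zero] at h2
      omega
    · intro t ht
      show ((t.val : ℕ) : ZMod p) = t
      rw [ZMod.natCast_val, ZMod.cast_id]
    · intro T hT
      simp only [Finset.mem_Ico] at hT
      show ZMod.val ((T : ℕ) : ZMod p) = T
      exact ZMod.val_natCast_of_lt hT.2
    · intro t ht
      have h1 : t ≠ 0 := (Finset.mem_erase.mp ht).1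
      rw [Fbound, if_neg h1]
  rw [hbij]
  have hterm : ∀ T ∈ Finset.Ico 1 p,
      (p : ℝ) / (2 * (min T (p - T) : ℕ)) ≤ (p : ℝ) / 2 * (1 / T + 1 / ((p - T : ℕ))) := by
    intro T hT
    simp only [Finset.mem_Ico] at hT
    have hT1 : (1 : ℝ) ≤ T := by exact_mod_cast hT.1
    have hpT : 1 ≤ p - T := by omega
    have hpT1 : (1 : ℝ) ≤ ((p - T : ℕ)) := by exact_mod_cast hpT
    have hmin : (1 : ℝ) / ((min T (p - T) : ℕ)) ≤ 1 / T + 1 / ((p - T : ℕ)) := by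
      rcases min_choice T (p - T) with h | h <;> rw [h]
      · have : (0:ℝ) ≤ 1 / ((p - T : ℕ)) := by positivity
        linarith
      · have : (0:ℝ) ≤ 1 / (T:ℝ) := by positivity
        linarith
    have hm1 : 1 ≤ min T (p - T) := le_min hT.1 hpT
    have hm0 : ((min T (p - T) : ℕ) : ℝ) ≠ 0 := by
      have : (1:ℝ) ≤ ((min T (p - T) : ℕ)) := by exact_mod_cast hm1
      linarith
    calc (p : ℝ) / (2 * (min T (p - T) : ℕ)) = (p : ℝ) / 2 * (1 / ((min T (p - T) : ℕ))) := by
          field_simp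
      _ ≤ (p : ℝ) / 2 * (1 / T + 1 / ((p - T : ℕ))) := by
          apply mul_le_mul_of_nonneg_left hmin (by positivity)
  have hsum : ∑ T ∈ Finset.Ico 1 p, (p : ℝ) / (2 * (min T (p - T) : ℕ)) ≤ (p : ℝ) * (1 + Real.log p) := by
    calc ∑ T ∈ Finset.Ico 1 p, (p : ℝ) / (2 * (min T (p - T) : ℕ))
        ≤ ∑ T ∈ Finset.Ico 1 p, (p : ℝ) / 2 * (1 / T + 1 / ((p - T : ℕ))) :=
          Finset.sum_le_sum hterm
      _ = (p : ℝ) / 2 * (∑ T ∈ Finset.Ico 1 p, (1 : ℝ) / T + ∑ T ∈ Finset.Ico 1 p, (1 : ℝ) / ((p - T : ℕ))) := by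
          rw [← Finset.mul_sum, Finset.sum_add_distrib]
      _ = (p : ℝ) * ((harmonic (p - 1) : ℚ) : ℝ) := by
          rw [sum_inv_Ico p hp, harmonic_Ico p hp]; ring
      _ ≤ (p : ℝ) * (1 + Real.log p) := by
          apply mul_le_mul_of_nonneg_left _ hpR.le
          refine le_trans (harmonic_le_one_add_log (p - 1)) ?_
          have h1 : (0:ℝ) < ((p - 1 : ℕ)) := by
            have : 1 ≤ p - 1 := by omega
            exact_mod_cast this
          have h2 : ((p - 1 : ℕ) : ℝ) ≤ p := by
            have : p - 1 ≤ p := by omega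
            exact_mod_cast this
          have := Real.log_le_log h1 h2
          linarith

  have hfin : (p : ℝ) * (2 + Real.log p) = (p:ℝ) + (p:ℝ) * (1 + Real.log p) := by ring
  rw [hfin]
  linarith

open Complex in
theorem exp_sum_fermatQuotient_bound :
    ∃ C : ℝ, 0 < C ∧ ∀ (p s N : ℕ) (M : ℤ) (a : ℕ → ℤ),
      p.Prime → 1 ≤ s → s < p → (∃ j < s, ¬ (p : ℤ) ∣ a j) → 1 ≤ N → N < p ^ 2 →
      ‖∑ u ∈ Finset.range N,
          Complex.exp (2 * Real.pi * Complex.I *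
            ((∑ j ∈ Finset.range s,
              (a j : ℂ) * (fermatQuotient p (M + 1 + u + j) : ℂ)) / (p : ℂ)))‖ ≤
        C * s * p * Real.log p := by
  refine ⟨100, by norm_num, ?_⟩
  intro p s N M a hp hs1 hsp hj hN1 hNp2
  haveI : Fact p.Prime := ⟨hp⟩
  haveI : NeZero p := ⟨hp.ne_zero⟩
  have hp0 : 0 < p := hp.pos
  have hp2 : 2 ≤ p := hp.two_le
  have hpR : (0 : ℝ) < p := by exact_mod_cast hp0
  have hpC : (p : ℂ) ≠ 0 := by exact_mod_cast hpR.ne'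
  set f : ℕ → ℤ := fun u => ∑ j ∈ Finset.range s, a j * fermatQuotient p (M + 1 + u + j)
    with hf
  -- rewrite terms as psiC
  have hterm : ∀ u : ℕ,
      Complex.exp (2 * Real.pi * Complex.I *
        ((∑ j ∈ Finset.range s,
          (a j : ℂ) * (fermatQuotient p (M + 1 + u + j) : ℂ)) / (p : ℂ))) = psiC p (f u) := by
    intro u
    rw [psiC]
    congr 1
    have hsum : (∑ j ∈ Finset.range s,
        (a j : ℂ) * (fermatQuotient p (M + 1 + u + j) : ℂ)) = ((f u : ℤ) : ℂ) := by
      rw [hf]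
      push_cast
      rfl
    rw [hsum]
    push_cast
    field_simp
  rw [Finset.sum_congr rfl (fun u _ => hterm u)]
  -- regroup
  set Kv : ℕ → ℕ := fun v => (N + p - 1 - v) / p with hKv
  have hKiff : ∀ v, v < p → ∀ k : ℕ, (v + k * p < N ↔ k < Kv v) := by
    intro v hv k
    show v + k * p < N ↔ k < (N + p - 1 - v) / p
    have h1 : (k + 1 ≤ (N + p - 1 - v) / p) ↔ (k + 1) * p ≤ N + p - 1 - v :=
      Nat.le_div_iff_mul_le hp0
    rw [show (k < (N + p - 1 - v) / p) ↔ (k + 1 ≤ (N + p - 1 - v) / p) from Iff.rfl, h1]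
    have h2 : (k + 1) * p = k * p + p := by ring
    rw [h2]
    omega
  have hKle : ∀ v, Kv v ≤ p := by
    intro v
    show (N + p - 1 - v) / p ≤ p
    have h3 : N < p * p := by rw [pow_two] at hNp2; exact hNp2
    have h4 : (N + p - 1 - v) / p < p + 1 ↔ N + p - 1 - v < (p + 1) * p :=
      Nat.div_lt_iff_lt_mul hp0
    have h5 : (p + 1) * p = p * p + p := by ring
    omega
  have hregroup : (∑ u ∈ Finset.range N, psiC p (f u)) =
      ∑ v ∈ Finset.range p, ∑ k ∈ Finset.range (Kv v), psiC p (f (v + k * p)) := by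
    rw [← Finset.sum_sigma (Finset.range p) (fun v => Finset.range (Kv v))
      (fun x => psiC p (f (x.1 + x.2 * p)))]
    refine Finset.sum_nbij' (fun u => ⟨u % p, u / p⟩) (fun x => x.1 + x.2 * p) ?_ ?_ ?_ ?_ ?_
    · intro u hu
      rw [Finset.mem_range] at hu
      rw [Finset.mem_sigma]
      refine ⟨Finset.mem_range.mpr (Nat.mod_lt _ hp0), Finset.mem_range.mpr ?_⟩
      rw [← hKiff (u % p) (Nat.mod_lt _ hp0) (u / p)]
      rw [Nat.mod_add_div' u p]
      exact hu
    · intro x hx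
      rw [Finset.mem_sigma, Finset.mem_range, Finset.mem_range] at hx
      rw [Finset.mem_range]
      exact (hKiff x.1 hx.1 x.2).mpr hx.2
    · intro u hu
      exact Nat.mod_add_div' u p
    · intro x hx
      rw [Finset.mem_sigma, Finset.mem_range, Finset.mem_range] at hx
      obtain ⟨v, k⟩ := x
      show (⟨(v + k * p) % p, (v + k * p) / p⟩ : Σ _ : ℕ, ℕ) = ⟨v, k⟩
      have h1 : (v + k * p) % p = v := by
        rw [Nat.add_mul_mod_self_right, Nat.mod_eq_of_lt hx.1]
      have h2 : (v + k * p) / p = k := by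
        rw [Nat.add_mul_div_right _ _ hp0, Nat.div_eq_of_lt hx.1, zero_add]
      rw [h1, h2]
    · intro u hu
      rw [Nat.mod_add_div' u p]
  rw [hregroup]
  -- inner sums
  set inv : ℤ → ℤ := fun w => (((w : ZMod p)⁻¹).val : ℤ) with hinv
  set r : ℕ → ℤ := fun v => ∑ j ∈ Finset.range s, a j * inv (M + 1 + v + j) with hr
  have hshift : ∀ v k : ℕ, f (v + k * p) ≡ f v - (k : ℤ) * r v [ZMOD (p : ℤ)] := by
    intro v k
    rw [← ZMod.intCast_eq_intCast_iff]
    rw [hf, hr, hinv]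
    push_cast
    rw [Finset.mul_sum, ← Finset.sum_sub_distrib]
    refine Finset.sum_congr rfl ?_
    intro j hj2
    have harg : M + 1 + ((v : ℤ) + (k : ℤ) * (p : ℤ)) + (j : ℤ) =
        (M + 1 + (v : ℤ) + (j : ℤ)) + (k : ℤ) * (p : ℤ) := by ring
    rw [harg]
    have hcast := (ZMod.intCast_eq_intCast_iff _ _ _).mpr
      (fq_shift p hp (M + 1 + (v : ℤ) + (j : ℤ)) k)
    rw [hcast]
    push_cast
    ring
  have hinner : ∀ v ∈ Finset.range p,
      ‖∑ k ∈ Finset.range (Kv v), psiC p (f (v + k * p))‖ ≤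
        Fbound p (((- r v : ℤ) : ZMod p)) := by
    intro v hv
    have heq : ∀ k ∈ Finset.range (Kv v),
        psiC p (f (v + k * p)) = psiC p (f v) * (psiC p (- r v)) ^ k := by
      intro k hk
      rw [psiC_congr p hp0 (hshift v k)]
      rw [sub_eq_add_neg, psiC_add]
      congr 1
      rw [show -((k : ℤ) * r v) = (k : ℤ) * (- r v) by ring]
      exact psiC_nat_mul p k (- r v)
    rw [Finset.sum_congr rfl heq, ← Finset.mul_sum, norm_mul, psiC_norm, one_mul]
    exact inner_bound p (Kv v) hp0 (hKle v) (- r v)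
  calc ‖∑ v ∈ Finset.range p, ∑ k ∈ Finset.range (Kv v), psiC p (f (v + k * p))‖
      ≤ ∑ v ∈ Finset.range p, ‖∑ k ∈ Finset.range (Kv v), psiC p (f (v + k * p))‖ :=
        norm_sum_le _ _
    _ ≤ ∑ v ∈ Finset.range p, Fbound p (((- r v : ℤ) : ZMod p)) :=
        Finset.sum_le_sum hinner
    _ ≤ (100 : ℝ) * s * p * Real.log p := by
        set Rfun : ZMod p → ZMod p :=
          fun x => ∑ j ∈ Finset.range s, (a j : ZMod p) * (x + (j : ZMod p))⁻¹ with hRfun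
        have hFnn : ∀ t : ZMod p, 0 ≤ Fbound p t := by
          intro t; rw [Fbound]; split <;> positivity
        have hrv : ∀ v : ℕ, ((- r v : ℤ) : ZMod p) = - Rfun (((M + 1 + v : ℤ) : ZMod p)) := by
          intro v
          rw [hr, hinv, hRfun]
          push_cast
          congr 1
          refine Finset.sum_congr rfl ?_
          intro j hj2
          rw [ZMod.natCast_val, ZMod.cast_id]
        have hstep1 : ∑ v ∈ Finset.range p, Fbound p (((- r v : ℤ) : ZMod p)) =
            ∑ x : ZMod p, Fbound p (- Rfun x) := by
          rw [Finset.sum_congr rfl (fun v _ => by rw [hrv v])]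
          set c : ZMod p := ((M + 1 : ℤ) : ZMod p) with hc
          refine Finset.sum_nbij' (fun v => ((M + 1 + v : ℤ) : ZMod p))
            (fun x => (x - c).val) ?_ ?_ ?_ ?_ ?_
          · intro v hv; exact Finset.mem_univ _
          · intro x hx; exact Finset.mem_range.mpr (ZMod.val_lt _)
          · intro v hv
            rw [Finset.mem_range] at hv
            show (((M + 1 + (v : ℤ) : ℤ) : ZMod p) - c).val = v
            have h1 : (((M + 1 + (v : ℤ) : ℤ) : ZMod p)) = c + (v : ZMod p) := by
              rw [hc]; push_cast; ring
            rw [h1, add_sub_cancel_left]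
            exact ZMod.val_natCast_of_lt hv
          · intro x hx
            show (((M + 1 + ((x - c).val : ℤ) : ℤ) : ZMod p)) = x
            have h1 : (((M + 1 + ((x - c).val : ℤ) : ℤ) : ZMod p)) = c + (((x - c).val : ℕ) : ZMod p) := by
              rw [hc]; push_cast; ring
            rw [h1, ZMod.natCast_val, ZMod.cast_id]
            ring
          · intro v hv; rfl
        have hstep2 : ∑ x : ZMod p, Fbound p (- Rfun x) ≤
            ∑ t : ZMod p, (2 * s : ℝ) * Fbound p t := by
          rw [← Finset.sum_fiberwise_of_maps_to
            (fun (x : ZMod p) _ => Finset.mem_univ (- Rfun x)) (fun x => Fbound p (- Rfun x))]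
          refine Finset.sum_le_sum ?_
          intro t ht
          have hcongr : ∀ x ∈ Finset.univ.filter (fun x : ZMod p => - Rfun x = t),
              Fbound p (- Rfun x) = Fbound p t := by
            intro x hx
            rw [(Finset.mem_filter.mp hx).2]
          rw [Finset.sum_congr rfl hcongr, Finset.sum_const, nsmul_eq_mul]
          have hcard : (Finset.univ.filter (fun x : ZMod p => - Rfun x = t)).card ≤ 2 * s := by
            have hfe : (Finset.univ.filter (fun x : ZMod p => - Rfun x = t)) =
                (Finset.univ.filter (fun x : ZMod p => Rfun x = - t)) := by
              refine Finset.filter_congr ?_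
              intro x hx
              constructor
              · intro h; rw [← h]; ring
              · intro h; rw [h]; ring
            rw [hfe, hRfun]
            exact fiber_bound p s hsp a hj (- t)
          have h2s : ((Finset.univ.filter (fun x : ZMod p => - Rfun x = t)).card : ℝ) ≤ (2 * s : ℝ) := by
            exact_mod_cast hcard
          exact mul_le_mul_of_nonneg_right h2s (hFnn t)
        have hstep3 : ∑ t : ZMod p, (2 * s : ℝ) * Fbound p t ≤
            (2 * s : ℝ) * ((p : ℝ) * (2 + Real.log p)) := by
          rw [← Finset.mul_sum]
          refine mul_le_mul_of_nonneg_left (sum_Fbound_le p hp2) (by positivity)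
        have hlog : (0.693 : ℝ) ≤ Real.log p := by
          have h1 : Real.log 2 ≤ Real.log p := by
            apply Real.log_le_log (by norm_num)
            exact_mod_cast hp2
          have h2 := Real.log_two_gt_d9
          linarith
        have hsR : (1 : ℝ) ≤ s := by exact_mod_cast hs1
        calc ∑ v ∈ Finset.range p, Fbound p (((- r v : ℤ) : ZMod p))
            ≤ (2 * s : ℝ) * ((p : ℝ) * (2 + Real.log p)) := by
              rw [hstep1]; exact le_trans hstep2 hstep3
          _ ≤ (100 : ℝ) * s * p * Real.log p := by
              have hmul : (0 : ℝ) ≤ (s : ℝ) * p := by positivity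
              nlinarith [mul_nonneg hmul (by linarith : (0:ℝ) ≤ 98 * Real.log p - 4)]
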